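/- Let m ≥ 2 and 1 ≤ k ≤ m. Let the random m×k matrix Q be √(m/k) times the matrix obtained by removing m−k uniformly random columns from the m×m identity matrix. Then for every real m×m matrix A, ‖E[Q Qᵀ A Q Qᵀ]‖ = (m/k)·‖ ((k−1)/(m−1))·A + ((m−k)/(m−1))·diag(A) ‖, where ‖·‖ denotes the operator norm on m×m real matrices. -/

import Mathlib

open Matrix Finset

lemma count_contains {α : Type*} [DecidableEq α] (s t : Finset α) (hts : t ⊆ s) (k : ℕ)
    (htk : t.card ≤ k) :
    ((powersetCard k s).filter (fun S => t ⊆ S)).card = (s.card - t.card).choose (k - t.card) := by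
  rw [← Finset.card_sdiff_of_subset hts, ← card_powersetCard (k - t.card) (s \ t)]
  apply Finset.card_bij' (fun S _ => S \ t) (fun U _ => U ∪ t)
  · intro S hS
    simp only [mem_filter, mem_powersetCard] at hS ⊢
    obtain ⟨⟨hSs, hScard⟩, htS⟩ := hS
    exact ⟨sdiff_subset_sdiff hSs (le_refl t), by rw [Finset.card_sdiff_of_subset htS, hScard]⟩
  · intro U hU
    simp only [mem_powersetCard] at hU
    obtain ⟨hUs, hUcard⟩ := hU
    have hdisj : Disjoint U t := Finset.disjoint_of_subset_left hUs sdiff_disjoint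
    simp only [mem_filter, mem_powersetCard]
    refine ⟨⟨union_subset (hUs.trans (Finset.sdiff_subset)) hts, ?_⟩, Finset.subset_union_right⟩
    rw [Finset.card_union_of_disjoint hdisj, hUcard]
    omega
  · intro S hS
    simp only [mem_filter, mem_powersetCard] at hS
    exact Finset.sdiff_union_of_subset hS.2
  · intro U hU
    simp only [mem_powersetCard] at hU
    have hdisj : Disjoint U t := Finset.disjoint_of_subset_left hU.1 sdiff_disjoint
    rw [Finset.union_sdiff_cancel_right hdisj]

/-- The operator norm on `m × m` real matrices induced by the Euclidean norm. -/
noncomputable def opNorm {m : ℕ} (A : Matrix (Fin m) (Fin m) ℝ) : ℝ :=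
  ‖Matrix.toEuclideanCLM (𝕜 := ℝ) (n := Fin m) A‖

set_option synthInstance.maxHeartbeats 400000 in
lemma opNorm_smul {m : ℕ} (c : ℝ) (A : Matrix (Fin m) (Fin m) ℝ) :
    opNorm (c • A) = |c| * opNorm A := by
  unfold opNorm
  rw [_root_.map_smul]
  exact (norm_smul c (Matrix.toEuclideanCLM (𝕜 := ℝ) (n := Fin m) A)).trans
    (by rw [Real.norm_eq_abs])

lemma rand_k_matrix_eq (m k : ℕ) (hm : 2 ≤ m) (hk : 1 ≤ k) (hkm : k ≤ m)
    (A : Matrix (Fin m) (Fin m) ℝ) :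
    (((m.choose k : ℝ))⁻¹ •
          ∑ S ∈ Finset.powersetCard k (Finset.univ : Finset (Fin m)),
            (((m : ℝ) / k) • Matrix.diagonal (fun i => if i ∈ S then (1 : ℝ) else 0)) * A *
              (((m : ℝ) / k) • Matrix.diagonal (fun i => if i ∈ S then (1 : ℝ) else 0))) =
      ((m : ℝ) / k) •
          ((((k : ℝ) - 1) / ((m : ℝ) - 1)) • A +
            (((m : ℝ) - (k : ℝ)) / ((m : ℝ) - 1)) • Matrix.diagonal (fun i => A i i)) := by
  have hm0 : (m : ℝ) ≠ 0 := by positivity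
  have hk0 : (k : ℝ) ≠ 0 := by positivity
  have hm1 : (m : ℝ) - 1 ≠ 0 := by
    have : (2:ℝ) ≤ m := by exact_mod_cast hm
    linarith
  have hC : (0:ℕ) < m.choose k := Nat.choose_pos hkm
  have hC0 : ((m.choose k : ℕ) : ℝ) ≠ 0 := by exact_mod_cast hC.ne'
  ext i j
  simp only [Matrix.smul_apply, Matrix.sum_apply, Matrix.add_apply, smul_eq_mul]
  have hsummand : ∀ S ∈ Finset.powersetCard k (Finset.univ : Finset (Fin m)),
      ((((m : ℝ) / k) • Matrix.diagonal (fun i => if i ∈ S then (1 : ℝ) else 0)) * A *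
        (((m : ℝ) / k) • Matrix.diagonal (fun i => if i ∈ S then (1 : ℝ) else 0))) i j
      = ((m:ℝ)/k)^2 * A i j * (if ({i, j} : Finset (Fin m)) ⊆ S then 1 else 0) := by
    intro S _
    by_cases hi : i ∈ S <;> by_cases hj : j ∈ S <;>
      simp [hi, hj, Matrix.smul_mul, Matrix.mul_smul, Matrix.smul_apply,
        Matrix.mul_diagonal, Matrix.diagonal_mul, Finset.insert_subset_iff, smul_eq_mul] <;> ring
  rw [Finset.sum_congr rfl hsummand, ← Finset.mul_sum, Finset.sum_boole]
  -- Nat identity: m * C(m-1, k-1) = C(m,k) * k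
  have h1 : (m:ℝ) * (((m-1).choose (k-1) : ℕ) : ℝ) = ((m.choose k : ℕ) : ℝ) * k := by
    have h := Nat.add_one_mul_choose_eq (m-1) (k-1)
    have hm' : m-1+1 = m := by omega
    have hk' : k-1+1 = k := by omega
    rw [hm', hk'] at h
    exact_mod_cast h
  by_cases hij : i = j
  · subst hij
    have hset : ({i, i} : Finset (Fin m)) = {i} := by simp
    have hcount : (Finset.filter (fun S => ({i, i} : Finset (Fin m)) ⊆ S)
        (Finset.powersetCard k (Finset.univ : Finset (Fin m)))).card
        = (m - 1).choose (k - 1) := by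
      rw [hset]
      have := count_contains (Finset.univ : Finset (Fin m)) {i} (by simp) k (by simpa using hk)
      simpa using this
    rw [hcount, Matrix.diagonal_apply_eq]
    field_simp
    linear_combination (A i i * ((m:ℝ)-1)) * h1
  · rw [Matrix.diagonal_apply_ne _ hij]
    have hcard2 : ({i, j} : Finset (Fin m)).card = 2 := by
      rw [Finset.card_insert_of_notMem (by simpa using hij), Finset.card_singleton]
    by_cases hk2 : 2 ≤ k
    · have hcount : (Finset.filter (fun S => ({i, j} : Finset (Fin m)) ⊆ S)
          (Finset.powersetCard k (Finset.univ : Finset (Fin m)))).card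
          = (m - 2).choose (k - 2) := by
        have := count_contains (Finset.univ : Finset (Fin m)) {i, j} (by simp) k
          (by rw [hcard2]; exact hk2)
        simpa [hcard2] using this
      rw [hcount]
      have h2 : ((m:ℝ) - 1) * (((m-2).choose (k-2) : ℕ) : ℝ)
          = (((m-1).choose (k-1) : ℕ) : ℝ) * ((k:ℝ) - 1) := by
        have h := Nat.add_one_mul_choose_eq (m-2) (k-2)
        have hm' : m-2+1 = m - 1 := by omega
        have hk' : k-2+1 = k - 1 := by omega
        rw [hm', hk'] at h
        have hc : ((m - 1 : ℕ) : ℝ) = (m:ℝ) - 1 := by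
          push_cast [Nat.cast_sub (by omega : 1 ≤ m)]; ring
        have kc : ((k - 1 : ℕ) : ℝ) = (k:ℝ) - 1 := by
          push_cast [Nat.cast_sub hk]; ring
        calc ((m:ℝ) - 1) * (((m-2).choose (k-2) : ℕ) : ℝ)
            = (((m-1) * (m-2).choose (k-2) : ℕ) : ℝ) := by push_cast [← hc]; ring
          _ = (((m-1).choose (k-1) * (k-1) : ℕ) : ℝ) := by exact_mod_cast h
          _ = (((m-1).choose (k-1) : ℕ) : ℝ) * ((k:ℝ) - 1) := by push_cast [← kc]; ring
      field_simp
      linear_combination ((m:ℝ) * A i j) * h2 + (A i j * ((k:ℝ)-1)) * h1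
    · have hk1 : k = 1 := by omega
      have hcount : (Finset.filter (fun S => ({i, j} : Finset (Fin m)) ⊆ S)
          (Finset.powersetCard k (Finset.univ : Finset (Fin m)))).card = 0 := by
        rw [Finset.card_eq_zero, Finset.filter_eq_empty_iff]
        intro S hS hsub
        have h1' := (Finset.mem_powersetCard.mp hS).2
        have := Finset.card_le_card hsub
        omega
      rw [hcount, hk1]
      norm_num


/-- The operator norm of `E[Q Qᵀ A Q Qᵀ]` for the rand-k compressor, where
`Q Qᵀ = (m/k) P_S` for a uniformly random `k`-element subset `S` of `{1,…,m}`. -/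
theorem rand_k_Q_seminorm (m k : ℕ) (hm : 2 ≤ m) (hk : 1 ≤ k) (hkm : k ≤ m)
    (A : Matrix (Fin m) (Fin m) ℝ) :
    opNorm
        (((m.choose k : ℝ))⁻¹ •
          ∑ S ∈ Finset.powersetCard k (Finset.univ : Finset (Fin m)),
            (((m : ℝ) / k) • Matrix.diagonal (fun i => if i ∈ S then (1 : ℝ) else 0)) * A *
              (((m : ℝ) / k) • Matrix.diagonal (fun i => if i ∈ S then (1 : ℝ) else 0))) =
      ((m : ℝ) / k) *
        opNorm
          ((((k : ℝ) - 1) / ((m : ℝ) - 1)) • A +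
            (((m : ℝ) - (k : ℝ)) / ((m : ℝ) - 1)) • Matrix.diagonal (fun i => A i i)) := by
  rw [rand_k_matrix_eq m k hm hk hkm A, opNorm_smul, abs_of_nonneg (by positivity)]
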